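/- Let u : ℍ → ℝ be bounded, continuous, and h-quasiconvex in ℍ, and for δ > 0 define the sup-convolution u^δ(p) = sup{u(q) : d̃_H(p,q) < δ}. Then u^δ is h-quasiconvex in ℍ. -/
import Mathlib


noncomputable section

/-- The underlying space of the first Heisenberg group: `ℝ³`. -/
abbrev Heis := ℝ × ℝ × ℝ

/-- Heisenberg group multiplication. -/
def hmul (p q : Heis) : Heis :=
  (p.1 + q.1, p.2.1 + q.2.1, p.2.2 + q.2.2 + (p.1 * q.2.1 - q.1 * p.2.1) / 2)

/-- Heisenberg group inverse. -/
def hinv (p : Heis) : Heis := (-p.1, -p.2.1, -p.2.2)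

/-- The horizontal plane `ℍ_p = p · ℍ₀` through `p`. -/
def hplane (p : Heis) : Set Heis := {q | ∃ h : Heis, h.2.2 = 0 ∧ q = hmul p h}

/-- The (Euclidean) segment `[p,q]`. -/
def hseg (p q : Heis) : Set Heis :=
  {w | ∃ l : ℝ, 0 ≤ l ∧ l ≤ 1 ∧ w = (1 - l) • p + l • q}

/-- The half-open segment `(p,q]`. -/
def hsegHalfOpen (p q : Heis) : Set Heis :=
  {w | ∃ l : ℝ, 0 < l ∧ l ≤ 1 ∧ w = (1 - l) • p + l • q}

/-- A set `E ⊆ ℍ` is h-convex if for every `p ∈ E` and `q ∈ ℍ_p ∩ E`,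
the horizontal segment `[p,q]` lies in `E`. -/
def IsHConvex (E : Set Heis) : Prop :=
  ∀ p ∈ E, ∀ q ∈ hplane p, q ∈ E → ∀ w ∈ hseg p q, w ∈ E

/-- A set `E` is h-convex up to boundary if for every `p ∈ ∂E` and `q ∈ ℍ_p ∩ E`,
the half-open segment `(p,q]` lies in `E`. -/
def IsHConvexUpToBoundary (E : Set Heis) : Prop :=
  ∀ p ∈ frontier E, ∀ q ∈ hplane p, q ∈ E → ∀ w ∈ hsegHalfOpen p q, w ∈ E

/-- A function `u` is h-quasiconvex on `Ω` if `u(w) ≤ max (u p) (u q)` for all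
`p ∈ Ω`, `q ∈ ℍ_p ∩ Ω` and `w ∈ [p,q]`. -/
def IsHQuasiconvexOn (Ω : Set Heis) (u : Heis → ℝ) : Prop :=
  ∀ p ∈ Ω, ∀ q ∈ hplane p, q ∈ Ω → ∀ w ∈ hseg p q, u w ≤ max (u p) (u q)

/-- `Qf` is the h-quasiconvex envelope of `f` on `Ω`: the greatest h-quasiconvex
function majorized by `f` on `Ω` (equivalently, the pointwise supremum of all
h-quasiconvex minorants of `f`). -/
def IsHQCEnvelopeOn (Ω : Set Heis) (f Qf : Heis → ℝ) : Prop :=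
  IsHQuasiconvexOn Ω Qf ∧ (∀ p ∈ Ω, Qf p ≤ f p) ∧
    ∀ g : Heis → ℝ, IsHQuasiconvexOn Ω g → (∀ p ∈ Ω, g p ≤ f p) → ∀ p ∈ Ω, g p ≤ Qf p

/-- The Korányi gauge. -/
def kGauge (p : Heis) : ℝ := ((p.1 ^ 2 + p.2.1 ^ 2) ^ 2 + 16 * p.2.2 ^ 2) ^ ((1 : ℝ) / 4)

/-- The left-invariant gauge metric `d_H(p,q) = |p⁻¹ · q|_G`. -/
def dLeft (p q : Heis) : ℝ := kGauge (hmul (hinv p) q)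

/-- The right-invariant gauge metric `d̃_H(p,q) = |p · q⁻¹|_G`. -/
def dRight (p q : Heis) : ℝ := kGauge (hmul p (hinv q))

/-- The gauge ball `B_r(p) = {q : |p⁻¹ · q|_G < r}`. -/
def gball (p : Heis) (r : ℝ) : Set Heis := {q | dLeft p q < r}

/-- The horizontal gradient `∇_H φ(p) = (X₁ φ(p), X₂ φ(p))`, where
`X₁ = ∂_x − (y/2) ∂_z` and `X₂ = ∂_y + (x/2) ∂_z`. -/
def hGrad (φ : Heis → ℝ) (p : Heis) : ℝ × ℝ :=
  (fderiv ℝ φ p ((1, 0, -p.2.1 / 2) : Heis), fderiv ℝ φ p ((0, 1, p.1 / 2) : Heis))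

/-- The pairing `⟨∇_H φ(p), (p⁻¹ · ξ)_h⟩`. -/
def hpair (φ : Heis → ℝ) (p ξ : Heis) : ℝ :=
  (hGrad φ p).1 * (hmul (hinv p) ξ).1 + (hGrad φ p).2 * (hmul (hinv p) ξ).2.1

/-- Local boundedness of `u` on `A`. -/
def LocBddOn (A : Set Heis) (u : Heis → ℝ) : Prop :=
  ∀ p ∈ A, ∃ s ∈ nhds p, ∃ C : ℝ, ∀ q ∈ s ∩ A, |u q| ≤ C

/-- `u` is a viscosity subsolution of `u + H(p, u, ∇_H u) = f` in `Ω`, where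
`H(p, u, ∇_H u) = sup {⟨∇_H u(p), (p⁻¹·ξ)_h⟩ : ξ ∈ ℍ_p ∩ Ω, u(ξ) < u(p)}`
(with the supremum understood to be `0` when `∇_H φ(p) = 0`). -/
def IsSubSoln (Ω : Set Heis) (f u : Heis → ℝ) : Prop :=
  UpperSemicontinuousOn u Ω ∧ LocBddOn Ω u ∧
    ∀ p ∈ Ω, ∀ φ : Heis → ℝ, ContDiff ℝ 1 φ →
      IsMaxOn (fun q => u q - φ q) Ω p →
        (∀ ξ ∈ hplane p, ξ ∈ Ω → u ξ < u p → u p + hpair φ p ξ ≤ f p) ∧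
        (hGrad φ p = 0 → u p ≤ f p)

/-- `u` is a viscosity supersolution of `u + H(p, u, ∇_H u) = f` in `Ω`, where for
supersolutions `H(p, u, ∇_H u) = sup {⟨∇_H u(p), (p⁻¹·ξ)_h⟩ : ξ ∈ ℍ_p ∩ Ω, u(ξ) ≤ u(p)}`.
(The set `Ŝ_p(u)` always contains `p` itself, so the inequality
`u(p) + sup ≥ f(p)` is expressed in ε-form.) -/
def IsSuperSoln (Ω : Set Heis) (f u : Heis → ℝ) : Prop :=
  LowerSemicontinuousOn u Ω ∧ LocBddOn Ω u ∧
    ∀ p ∈ Ω, ∀ φ : Heis → ℝ, ContDiff ℝ 1 φ →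
      IsMinOn (fun q => u q - φ q) Ω p →
        ∀ ε > 0, ∃ ξ ∈ hplane p, ξ ∈ Ω ∧ u ξ ≤ u p ∧ f p - ε ≤ u p + hpair φ p ξ

/-- `w` is the upper semicontinuous envelope of `v` on `A`: the smallest
upper semicontinuous function on `A` that majorizes `v`. -/
def IsUscEnvOn (A : Set Heis) (v w : Heis → ℝ) : Prop :=
  UpperSemicontinuousOn w A ∧ (∀ q ∈ A, v q ≤ w q) ∧
    ∀ z : Heis → ℝ, UpperSemicontinuousOn z A → (∀ q ∈ A, v q ≤ z q) → ∀ q ∈ A, w q ≤ z q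

/-- `w` is the lower semicontinuous envelope of `v` on `A`: the largest
lower semicontinuous function on `A` minorized by `v`. -/
def IsLscEnvOn (A : Set Heis) (v w : Heis → ℝ) : Prop :=
  LowerSemicontinuousOn w A ∧ (∀ q ∈ A, w q ≤ v q) ∧
    ∀ z : Heis → ℝ, LowerSemicontinuousOn z A → (∀ q ∈ A, z q ≤ v q) → ∀ q ∈ A, z q ≤ w q

/-- The h-convex hull of `E`: the intersection of all h-convex sets containing `E`. -/
def hconvexHull (E : Set Heis) : Set Heis := ⋂₀ {D : Set Heis | IsHConvex D ∧ E ⊆ D}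

/-- The direct convexification operator
`T[f](w) = inf {max (f p) (f q) : w ∈ [p,q], p ∈ Ω, q ∈ Ω ∩ ℍ_p}`. -/
def Tconv (Ω : Set Heis) (f : Heis → ℝ) : Heis → ℝ := fun w =>
  sInf {y | ∃ p ∈ Ω, ∃ q ∈ hplane p, q ∈ Ω ∧ w ∈ hseg p q ∧ y = max (f p) (f q)}

lemma hmul_assoc' (a b c : Heis) : hmul (hmul a b) c = hmul a (hmul b c) := by
  simp only [hmul, Prod.ext_iff]; refine ⟨by ring, by ring, by ring⟩

lemma dRight_hmul_left (g w : Heis) : dRight w (hmul g w) = kGauge (hinv g) := by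
  have : hmul w (hinv (hmul g w)) = hinv g := by
    simp only [hmul, hinv, Prod.ext_iff]; refine ⟨by ring, by ring, by ring⟩
  simp [dRight, this]

lemma dRight_self (w : Heis) : dRight w w = 0 := by
  have : hmul w (hinv w) = ((0 : ℝ), (0 : ℝ), (0 : ℝ)) := by
    simp only [hmul, hinv, Prod.ext_iff]; refine ⟨by ring, by ring, by ring⟩
  simp only [dRight, this, kGauge]
  norm_num

lemma hmul_affine (g p q : Heis) (l : ℝ) :
    hmul g ((1 - l) • p + l • q) = (1 - l) • hmul g p + l • hmul g q := by
  simp only [hmul, Prod.smul_mk, smul_eq_mul, Prod.mk_add_mk, Prod.ext_iff,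
    Prod.smul_def, Prod.fst_add, Prod.snd_add, Prod.smul_fst, Prod.smul_snd]
  refine ⟨by ring, by ring, by ring⟩

/-- Lemma 5.5 (H-quasiconvexity preserving by sup-convolution): if `u` is
bounded, continuous and h-quasiconvex in `ℍ`, then for any `δ > 0` the
sup-convolution `u^δ(p) = sup {u(q) : d̃_H(p,q) < δ}` is h-quasiconvex in `ℍ`. -/
theorem sup_convolution_hquasiconvex
    (u : Heis → ℝ) (hub : ∃ C : ℝ, ∀ p : Heis, |u p| ≤ C)
    (huc : Continuous u) (hu : IsHQuasiconvexOn Set.univ u)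
    (δ : ℝ) (hδ : 0 < δ) :
    IsHQuasiconvexOn Set.univ
      (fun p => sSup {y : ℝ | ∃ q : Heis, dRight p q < δ ∧ y = u q}) := by
  obtain ⟨C, hC⟩ := hub
  intro p _ q hq _ w hw
  obtain ⟨h, hh3, hqdef⟩ := hq
  obtain ⟨l, hl0, hl1, hwdef⟩ := hw
  have bdd : ∀ a : Heis, BddAbove {y : ℝ | ∃ q' : Heis, dRight a q' < δ ∧ y = u q'} := by
    intro a
    exact ⟨C, fun y ⟨q', _, hy⟩ => hy ▸ le_trans (le_abs_self _) (hC q')⟩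
  dsimp only
  have hne : Set.Nonempty {y : ℝ | ∃ q' : Heis, dRight w q' < δ ∧ y = u q'} :=
    ⟨u w, w, by rw [dRight_self]; exact hδ, rfl⟩
  apply csSup_le hne
  rintro y ⟨q', hq', rfl⟩
  set g : Heis := hmul q' (hinv w) with hg
  have hgw : hmul g w = q' := by
    simp only [hg, hmul, hinv, Prod.ext_iff]; refine ⟨by ring, by ring, by ring⟩
  have hdist : kGauge (hinv g) < δ := by
    rw [← dRight_hmul_left g w, hgw]; exact hq'
  -- q' lies on segment from g·p to g·q, with g·q in the plane of g·p
  have hplane' : hmul g q ∈ hplane (hmul g p) := by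
    exact ⟨h, hh3, by rw [hqdef]; exact (hmul_assoc' g p h).symm⟩
  have hseg' : q' ∈ hseg (hmul g p) (hmul g q) :=
    ⟨l, hl0, hl1, by rw [← hgw, hwdef, hmul_affine]⟩
  have key : u q' ≤ max (u (hmul g p)) (u (hmul g q)) :=
    hu (hmul g p) (Set.mem_univ _) (hmul g q) hplane' (Set.mem_univ _) q' hseg'
  have hp' : u (hmul g p) ≤ sSup {y : ℝ | ∃ q' : Heis, dRight p q' < δ ∧ y = u q'} :=
    le_csSup (bdd p) ⟨hmul g p, by rw [dRight_hmul_left]; exact hdist, rfl⟩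
  have hq'' : u (hmul g q) ≤ sSup {y : ℝ | ∃ q' : Heis, dRight q q' < δ ∧ y = u q'} :=
    le_csSup (bdd q) ⟨hmul g q, by rw [dRight_hmul_left]; exact hdist, rfl⟩
  exact le_trans key (max_le_max hp' hq'')
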